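/- Suppose s ≥ 2 is an integer and d ≥ 3 is an odd integer. Then there exist positive integers s' and d' with d' ≤ d such that for all positive integers n: ν_d(f_n(s,-1)) = 0 if d' ∤ n, and ν_d(f_n(s,-1)) = ν_d(s'·n/d') if d' | n, where ν_d(N) denotes the largest k with d^k | N. -/

import Mathlib

/-- Generalized Fibonacci sequence: f 0 = 0, f 1 = 1, f (n+2) = s * f (n+1) + t * f n. -/
def genFib (s t : ℤ) : ℕ → ℤ
  | 0 => 0
  | 1 => 1
  | n + 2 => s * genFib s t (n + 1) + t * genFib s t n

/-- ν_d(N): the largest k with d^k ∣ N (for d ≥ 2, N ≠ 0). -/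
noncomputable def dAdicVal (d : ℕ) (N : ℤ) : ℕ := sSup {k : ℕ | (d : ℤ) ^ k ∣ N}

namespace ACMS

variable (s : ℤ)

local notation "f" => genFib s (-1)

lemma f0 : f 0 = 0 := rfl
lemma f1 : f 1 = 1 := rfl
lemma f2 : f 2 = s := by show s * 1 + (-1) * 0 = s; ring

lemma frec (n : ℕ) : f (n + 2) = s * f (n + 1) - f n := by
  show s * f (n+1) + (-1) * f n = _; ring

/-- two-step induction -/
lemma two_step {P : ℕ → Prop} (h0 : P 0) (h1 : P 1)
    (h : ∀ n, P n → P (n + 1) → P (n + 2)) : ∀ n, P n := by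
  have key : ∀ n, P n ∧ P (n + 1) := by
    intro n
    induction n with
    | zero => exact ⟨h0, h1⟩
    | succ k ih => exact ⟨ih.2, h k ih.1 ih.2⟩
  exact fun n => (key n).1

lemma fadd (m n : ℕ) : f (n + m + 1) = f (n + 1) * f (m + 1) - f n * f m := by
  induction m using two_step generalizing n with
  | h0 => simp [f0, f1]
  | h1 => rw [show n + 1 + 1 = n + 2 from rfl, frec, f2, f1]; ring
  | h m ih1 ih2 =>
    rw [show n + (m + 2) + 1 = (n + m + 1) + 2 by omega, frec,
        show (n + m + 1) + 1 = n + (m + 1) + 1 by omega, ih2, ih1,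
        show m + 2 + 1 = (m + 1) + 2 from rfl, frec s (m+1),
        show m + 1 + 1 = m + 2 from rfl, frec s m]
    ring

lemma fmono (hs : 2 ≤ s) : ∀ n : ℕ, f n < f (n + 1) := by
  have key : ∀ n : ℕ, 0 ≤ f n ∧ f n < f (n + 1) := by
    apply two_step
    · exact ⟨le_refl 0, by rw [f0, f1]; norm_num⟩
    · exact ⟨by rw [f1]; norm_num, by rw [f1, f2]; linarith⟩
    · rintro n ⟨h1, h2⟩ ⟨h3, h4⟩
      have r1 := frec s n
      have r2 := frec s (n + 1)
      have m1 : 2 * f (n + 1) ≤ s * f (n + 1) := mul_le_mul_of_nonneg_right hs h3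
      have h5 : f (n + 1) < f (n + 2) := by rw [r1]; linarith
      have h6 : 0 ≤ f (n + 2) := by linarith
      have m2 : 2 * f (n + 2) ≤ s * f (n + 2) := mul_le_mul_of_nonneg_right hs h6
      rw [show n + 1 + 1 = n + 2 from rfl, show n + 2 + 1 = (n + 1) + 2 from rfl, r2]
      exact ⟨h6, by linarith⟩
  exact fun n => (key n).2

lemma fpos (hs : 2 ≤ s) {n : ℕ} (hn : 0 < n) : 0 < f n := by
  have : StrictMono (genFib s (-1)) := strictMono_nat_of_lt_succ (fmono s hs)
  have := this hn
  rwa [f0] at this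

lemma fdvd {m n : ℕ} (h : m ∣ n) : f m ∣ f n := by
  obtain ⟨k, rfl⟩ := h
  rcases Nat.eq_zero_or_pos m with rfl | hm
  · simpa using dvd_refl (f 0)
  obtain ⟨M, rfl⟩ := Nat.exists_eq_add_of_le hm
  induction k with
  | zero => simp [f0]
  | succ k ih =>
    rw [show (1 + M) * (k + 1) = (1 + M) * k + M + 1 by ring, fadd]
    refine dvd_sub (Dvd.dvd.mul_left ?_ _) (Dvd.dvd.mul_right ih _)
    exact dvd_of_eq (by rw [Nat.add_comm M 1])

lemma fcop (n : ℕ) : IsCoprime (f n) (f (n + 1)) := by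
  induction n with
  | zero => rw [f0, f1]; exact isCoprime_zero_left.mpr isUnit_one
  | succ n ih =>
    rw [show n + 1 + 1 = n + 2 from rfl, frec]
    have : IsCoprime (f (n + 1)) (-f n) := ih.symm.neg_right
    have h2 := this.add_mul_left_right s
    have : -f n + f (n + 1) * s = s * f (n + 1) - f n := by ring
    rwa [this] at h2

/-- existence of a positive index divisible by D -/
lemma rank_exists (D : ℕ) [NeZero D] : ∃ n : ℕ, 0 < n ∧ (D : ℤ) ∣ f n := by
  obtain ⟨a, b, hne, hab⟩ := Finite.exists_ne_map_eq_of_infinite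
    (fun n : ℕ => ((f n : ZMod D), (f (n + 1) : ZMod D)))
  wlog h : a < b generalizing a b
  · exact this b a (Ne.symm hne) hab.symm (by omega)
  have key : ∀ i, i ≤ a → ((f (a - i) : ZMod D) = (f (b - i) : ZMod D) ∧
      (f (a - i + 1) : ZMod D) = (f (b - i + 1) : ZMod D)) := by
    intro i
    induction i with
    | zero => exact fun _ => ⟨congrArg Prod.fst hab, congrArg Prod.snd hab⟩
    | succ i ih =>
      intro hi
      obtain ⟨e1, e2⟩ := ih (by omega)
      have ha : a - (i + 1) + 1 = a - i := by omega
      have hb : b - (i + 1) + 1 = b - i := by omega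
      refine ⟨?_, by rw [ha, hb]; exact e1⟩
      have ra := frec s (a - (i + 1))
      have rb := frec s (b - (i + 1))
      have ha2 : a - (i + 1) + 2 = a - i + 1 := by omega
      have hb2 : b - (i + 1) + 2 = b - i + 1 := by omega
      rw [ha2, ha] at ra
      rw [hb2, hb] at rb
      have : (f (a - (i+1)) : ZMod D) = s * (f (a-i) : ZMod D) - (f (a - i + 1) : ZMod D) := by
        have : ((f (a - i + 1) : ℤ) : ZMod D) = ((s * f (a - i) - f (a - (i+1)) : ℤ) : ZMod D) := by
          rw [← ra]
        push_cast at this ⊢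
        linear_combination this
      rw [this]
      have : (f (b - (i+1)) : ZMod D) = s * (f (b-i) : ZMod D) - (f (b - i + 1) : ZMod D) := by
        have : ((f (b - i + 1) : ℤ) : ZMod D) = ((s * f (b - i) - f (b - (i+1)) : ℤ) : ZMod D) := by
          rw [← rb]
        push_cast at this ⊢
        linear_combination this
      rw [this, e1, e2]
  obtain ⟨e1, -⟩ := key a (le_refl a)
  rw [Nat.sub_self] at e1
  refine ⟨b - a, by omega, ?_⟩
  rw [← ZMod.intCast_zmod_eq_zero_iff_dvd, ← e1, f0, Int.cast_zero]

lemma rank_char {D r : ℕ} (hr : 0 < r) (hDr : (D : ℤ) ∣ f r)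
    (hmin : ∀ m, 0 < m → m < r → ¬ (D : ℤ) ∣ f m) :
    ∀ n, (D : ℤ) ∣ f n ↔ r ∣ n := by
  intro n
  constructor
  · intro hDn
    rcases Nat.eq_zero_or_pos n with rfl | hn
    · exact Nat.dvd_zero r
    set t := n % r with ht
    have hlt : t < r := Nat.mod_lt n hr
    have hdec : n = r * (n / r) + t := (Nat.div_add_mod n r).symm.trans (by ring)
    rcases Nat.eq_zero_or_pos t with h0 | hpos
    · exact Nat.dvd_of_mod_eq_zero h0
    -- t ≥ 1 : show D ∣ f t, contradiction with minimality
    exfalso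
    obtain ⟨T, hT⟩ := Nat.exists_eq_add_of_le hpos
    have hq : (D : ℤ) ∣ f (r * (n / r)) := dvd_trans hDr (fdvd s ⟨n / r, rfl⟩)
    have hnn : n = r * (n / r) + T + 1 := by omega
    have := fadd s T (r * (n / r))
    rw [← hnn] at this
    have hTt : T + 1 = t := by omega
    rw [hTt] at this
    have hdvd2 : (D : ℤ) ∣ f (r * (n / r) + 1) * f t := by
      have : f (r * (n / r) + 1) * f t = f n + f (r * (n/r)) * f T := by rw [this]; ring
      rw [this]
      exact dvd_add hDn (Dvd.dvd.mul_right hq _)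
    have hcop : IsCoprime (D : ℤ) (f (r * (n / r) + 1)) :=
      IsCoprime.of_isCoprime_of_dvd_left (fcop s (r * (n/r))) hq
    have : (D : ℤ) ∣ f t := hcop.dvd_of_dvd_mul_left hdvd2
    exact hmin t hpos hlt this
  · intro hrn
    exact dvd_trans hDr (fdvd s hrn)

lemma key_identity (M : ℕ) (k : ℕ) :
    ∃ X Y Z : ℤ,
      f (k * (M + 1)) = f (M + 1) * Z ∧
      f (k * (M + 1)) * f (M + 2) ^ 2 =
        (k : ℤ) * f (M + 1) * f (M + 2) ^ (k + 1)
          - (k.choose 2 : ℤ) * s * f (M + 1) ^ 2 * f (M + 2) ^ k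
          + f (M + 1) ^ 3 * X ∧
      f (k * (M + 1) + 1) = f (M + 2) ^ k + f (M + 1) ^ 2 * Y := by
  set F := f (M + 1) with hF
  set u := f (M + 2) with hu
  induction k with
  | zero =>
    refine ⟨0, 0, 0, by simp [f0], by simp [f0], by simp [f1]⟩
  | succ k ih =>
    obtain ⟨X, Y, Z, hZ, hX, hY⟩ := ih
    have hfM : f M = s * F - u := by rw [hF, hu, frec s M]; ring
    have eg : f ((k+1) * (M+1)) = f (k * (M+1) + 1) * F - f (k * (M+1)) * (s * F - u) := by
      have h1 : (k+1) * (M+1) = k * (M+1) + M + 1 := by ring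
      rw [h1, fadd s M (k * (M+1)), ← hfM, hF]
    have eh : f ((k+1) * (M+1) + 1) = f (k * (M+1) + 1) * u - f (k * (M+1)) * F := by
      have h1 : (k+1) * (M+1) + 1 = k * (M+1) + (M + 1) + 1 := by ring
      rw [h1, fadd s (M+1) (k * (M+1)), ← hF, ← hu]
    have hc : ((k+1).choose 2 : ℤ) = (k.choose 2 : ℤ) + k := by
      rw [show k + 1 = k.succ from rfl, Nat.choose_succ_succ k 1, Nat.choose_one_right]
      push_cast; ring
    refine ⟨Y * u^2 + (k.choose 2 : ℤ) * s^2 * u^k + X * u - s * F * X,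
            Y * u - Z, (u^k + F^2 * Y) - Z * (s * F - u), ?_, ?_, ?_⟩
    · rw [eg, hY, hZ]; ring
    · rw [eg, hY, hc]
      push_cast
      linear_combination (u - s * F) * hX
    · rw [eh, hY, hZ]; ring

lemma cop_pu {p : ℕ} {M : ℕ} (hpF : (p : ℤ) ∣ f (M + 1)) : IsCoprime (p : ℤ) (f (M + 2)) :=
  IsCoprime.of_isCoprime_of_dvd_left (fcop s (M + 1)) hpF

lemma L1 {p : ℕ} (hp : p.Prime) (M k : ℕ) (hk : ¬ (p : ℤ) ∣ (k : ℤ))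
    (hpF : (p : ℤ) ∣ f (M + 1)) :
    ∀ c : ℕ, ((p : ℤ) ^ c ∣ f (k * (M + 1)) ↔ (p : ℤ) ^ c ∣ f (M + 1)) := by
  intro c
  obtain ⟨X, Y, Z, hZ, hX, hY⟩ := key_identity s M k
  set F := f (M + 1)
  set u := f (M + 2)
  have hprime : Prime (p : ℤ) := Nat.prime_iff_prime_int.mp hp
  have hcu : IsCoprime (p : ℤ) u := cop_pu s hpF
  set W : ℤ := (k : ℤ) * u ^ (k + 1) - (k.choose 2 : ℤ) * s * F * u ^ k + F ^ 2 * X with hW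
  have hfact : f (k * (M + 1)) * u ^ 2 = F * W := by rw [hX, hW]; ring
  have hcW : IsCoprime (p : ℤ) W := by
    rw [hprime.coprime_iff_not_dvd]
    intro hdvd
    have h1 : (p : ℤ) ∣ (k : ℤ) * u ^ (k + 1) := by
      have : (k : ℤ) * u ^ (k + 1) = W + F * ((k.choose 2 : ℤ) * s * u ^ k - F * X) := by
        rw [hW]; ring
      rw [this]
      exact dvd_add hdvd (Dvd.dvd.mul_right hpF _)
    rcases hprime.dvd_mul.mp h1 with h | h
    · exact hk h
    · exact (hprime.coprime_iff_not_dvd.mp hcu) (hprime.dvd_of_dvd_pow h)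
  constructor
  · intro h
    have h2 : (p : ℤ) ^ c ∣ F * W := hfact ▸ Dvd.dvd.mul_right h _
    exact ((hcW.pow_left : IsCoprime ((p:ℤ)^c) W)).dvd_of_dvd_mul_right h2
  · intro h
    have h2 : (p : ℤ) ^ c ∣ f (k * (M + 1)) * u ^ 2 := by
      rw [hfact]; exact Dvd.dvd.mul_right h _
    exact ((hcu.pow : IsCoprime ((p:ℤ)^c) (u^2))).dvd_of_dvd_mul_right h2

lemma L3 {p : ℕ} (hp : p.Prime) (hodd : p ≠ 2) (M : ℕ) {j : ℕ} (hj : 1 ≤ j)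
    (h1 : (p : ℤ) ^ j ∣ f (M + 1)) (h2 : ¬ (p : ℤ) ^ (j + 1) ∣ f (M + 1)) :
    (p : ℤ) ^ (j + 1) ∣ f (p * (M + 1)) ∧ ¬ (p : ℤ) ^ (j + 2) ∣ f (p * (M + 1)) := by
  obtain ⟨J, rfl⟩ : ∃ J, j = J + 1 := ⟨j - 1, by omega⟩
  obtain ⟨X, Y, Z, hZ, hX, hY⟩ := key_identity s M p
  set F := f (M + 1)
  set u := f (M + 2)
  have hprime : Prime (p : ℤ) := Nat.prime_iff_prime_int.mp hp
  have hpF : (p : ℤ) ∣ F := dvd_trans (dvd_pow_self _ (by omega : J + 1 ≠ 0)) h1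
  have hcu : IsCoprime (p : ℤ) u := cop_pu s hpF
  have hch : p ∣ p.choose 2 :=
    Nat.Prime.dvd_choose_self hp (by norm_num) (by have := hp.two_le; omega)
  obtain ⟨w, hw⟩ : (p : ℤ) ∣ (p.choose 2 : ℤ) := Int.natCast_dvd_natCast.mpr hch
  obtain ⟨G, hG⟩ := h1
  constructor
  · have key : (p : ℤ) ^ (J + 2) ∣ f (p * (M + 1)) * u ^ 2 := by
      rw [hX, hw, hG]
      refine ⟨G * u ^ (p+1) - (p:ℤ)^(J+1) * (w * s * G^2 * u^p) + (p:ℤ)^(2*J+1) * (G^3 * X), ?_⟩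
      ring
    exact ((hcu.pow : IsCoprime ((p:ℤ)^(J+2)) (u^2))).dvd_of_dvd_mul_right key
  · intro hcon
    have hall : (p : ℤ) ^ (J + 3) ∣ f (p * (M + 1)) * u ^ 2 := by
      exact Dvd.dvd.mul_right hcon (u ^ 2)
    have t1 : (p : ℤ) ^ (J + 3) ∣ (p : ℤ) * F * u ^ (p + 1) := by
      have heq : (p : ℤ) * F * u ^ (p + 1) = f (p * (M+1)) * u ^ 2
          - ((p:ℤ)^(J+3)) * ((p:ℤ)^(2*J) * (G^3 * X))
          + ((p:ℤ)^(J+3)) * ((p:ℤ)^J * (w * s * G^2 * u^p)) := by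
        rw [hX, hw, hG]; ring
      rw [heq]
      exact dvd_add (dvd_sub hall ⟨_, rfl⟩) ⟨_, rfl⟩
    have hred : (p : ℤ) ^ (J + 2) ∣ F * u ^ (p + 1) := by
      have hmul : (p:ℤ) * ((p:ℤ)^(J+2)) ∣ (p:ℤ) * (F * u ^ (p+1)) := by
        have e1 : (p:ℤ) * ((p:ℤ)^(J+2)) = (p:ℤ)^(J+3) := by ring
        have e2 : (p:ℤ) * (F * u ^ (p+1)) = (p:ℤ) * F * u ^ (p+1) := by ring
        rw [e1, e2]; exact t1
      exact (mul_dvd_mul_iff_left (by exact_mod_cast hp.pos.ne' : (p:ℤ) ≠ 0)).mp hmul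
    exact h2 (((hcu.pow : IsCoprime ((p:ℤ)^(J+2)) (u^(p+1)))).dvd_of_dvd_mul_right hred)

lemma L1' {p : ℕ} (hp : p.Prime) {m : ℕ} (k : ℕ) (hm : 0 < m) (hk : ¬ p ∣ k)
    (hpF : (p : ℤ) ∣ f m) :
    ∀ c : ℕ, ((p : ℤ) ^ c ∣ f (k * m) ↔ (p : ℤ) ^ c ∣ f m) := by
  obtain ⟨M, rfl⟩ : ∃ M, m = M + 1 := ⟨m - 1, by omega⟩
  exact L1 s hp M k (fun h => hk (Int.natCast_dvd_natCast.mp h)) hpF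

lemma L3' {p : ℕ} (hp : p.Prime) (hodd : p ≠ 2) {m : ℕ} (hm : 0 < m) {j : ℕ} (hj : 1 ≤ j)
    (h1 : (p : ℤ) ^ j ∣ f m) (h2 : ¬ (p : ℤ) ^ (j + 1) ∣ f m) :
    (p : ℤ) ^ (j + 1) ∣ f (p * m) ∧ ¬ (p : ℤ) ^ (j + 2) ∣ f (p * m) := by
  obtain ⟨M, rfl⟩ : ∃ M, m = M + 1 := ⟨m - 1, by omega⟩
  exact L3 s hp hodd M hj h1 h2

lemma EV {p : ℕ} (hp : p.Prime) (hodd : p ≠ 2) {r j : ℕ} (hr : 0 < r) (hj : 1 ≤ j)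
    (h1 : (p : ℤ) ^ j ∣ f r) (h2 : ¬ (p : ℤ) ^ (j + 1) ∣ f r) (t : ℕ) {k' : ℕ}
    (hk' : ¬ p ∣ k') :
    (p : ℤ) ^ (j + t) ∣ f (r * p ^ t * k') ∧ ¬ (p : ℤ) ^ (j + t + 1) ∣ f (r * p ^ t * k') := by
  have aux : ∀ t : ℕ, (p : ℤ) ^ (j + t) ∣ f (r * p ^ t) ∧
      ¬ (p : ℤ) ^ (j + t + 1) ∣ f (r * p ^ t) := by
    intro t
    induction t with
    | zero => simpa using ⟨h1, h2⟩
    | succ t ih =>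
      have hmpos : 0 < r * p ^ t := Nat.mul_pos hr (Nat.pow_pos hp.pos)
      have := L3' s hp hodd hmpos (by omega : 1 ≤ j + t) ih.1 ih.2
      have heq : p * (r * p ^ t) = r * p ^ (t + 1) := by ring
      rw [heq] at this
      exact ⟨by convert this.1 using 2; omega, by convert this.2 using 2; ring⟩
  obtain ⟨e1, e2⟩ := aux t
  have hmpos : 0 < r * p ^ t := Nat.mul_pos hr (Nat.pow_pos hp.pos)
  have hpF : (p : ℤ) ∣ f (r * p ^ t) := dvd_trans (dvd_pow_self _ (by omega : j + t ≠ 0)) e1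
  have hiff := L1' s hp k' hmpos hk' hpF
  have heq : k' * (r * p ^ t) = r * p ^ t * k' := by ring
  rw [heq] at hiff
  exact ⟨(hiff _).mpr e1, fun h => e2 ((hiff _).mp h)⟩

lemma small_rank {p : ℕ} (hp : p.Prime) (hodd : p ≠ 2) :
    ∃ n : ℕ, 0 < n ∧ n ≤ p ∧ (p : ℤ) ∣ f n := by
  haveI := Fact.mk hp
  have hp3 : 3 ≤ p := by have := hp.two_le; omega
  obtain ⟨q, hq⟩ : ∃ q, p = 2 * q + 1 := by
    obtain ⟨q, hq⟩ := hp.odd_of_ne_two hodd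
    exact ⟨q, by omega⟩
  by_cases hs2 : ((s : ZMod p) = 2 ∨ (s : ZMod p) = -2)
  · refine ⟨p, hp.pos, le_refl p, ?_⟩
    rw [← ZMod.intCast_zmod_eq_zero_iff_dvd]
    rcases hs2 with h | h
    · have key : ∀ n : ℕ, ((f n : ℤ) : ZMod p) = n := by
        apply two_step
        · simp [f0]
        · simp [f1]
        · intro n ih1 ih2
          have hc : ((f (n+2) : ℤ) : ZMod p) = (s : ZMod p) * ((f (n+1) : ℤ) : ZMod p)
              - ((f n : ℤ) : ZMod p) := by
            rw [frec]; push_cast; ring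
          rw [hc, ih1, ih2, h]; push_cast; ring
      rw [key p, ZMod.natCast_self]
    · have key : ∀ n : ℕ, ((f n : ℤ) : ZMod p) = (-1) ^ (n + 1) * n := by
        apply two_step
        · simp [f0]
        · simp [f1]
        · intro n ih1 ih2
          have hc : ((f (n+2) : ℤ) : ZMod p) = (s : ZMod p) * ((f (n+1) : ℤ) : ZMod p)
              - ((f n : ℤ) : ZMod p) := by
            rw [frec]; push_cast; ring
          rw [hc, ih1, ih2, h]; push_cast; ring
      rw [key p, ZMod.natCast_self]; ring
  · set K := AlgebraicClosure (ZMod p)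
    set σ : K := ((s : ℤ) : K) with hσ
    have hinj : Function.Injective (algebraMap (ZMod p) K) := (algebraMap (ZMod p) K).injective
    obtain ⟨x, hx⟩ : ∃ x : K, x ^ 2 - σ * x + 1 = 0 := by
      obtain ⟨x, hx⟩ := IsAlgClosed.exists_root
        (Polynomial.C 1 * Polynomial.X ^ 2 + Polynomial.C (-σ) * Polynomial.X + Polynomial.C 1)
        (by rw [Polynomial.degree_quadratic one_ne_zero]; exact two_ne_zero)
      refine ⟨x, ?_⟩
      have := hx
      simp only [Polynomial.IsRoot, Polynomial.eval_add, Polynomial.eval_mul,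
        Polynomial.eval_pow, Polynomial.eval_C, Polynomial.eval_X] at this
      linear_combination this
    set x' : K := σ - x with hx'
    have hxx' : x * x' = 1 := by rw [hx']; linear_combination -hx
    have hsum : x + x' = σ := by rw [hx']; ring
    have hx0 : x ≠ 0 := by
      intro h0; rw [h0] at hxx'; simp at hxx'
    have hfx : ∀ n : ℕ, ((f n : ℤ) : K) * (x - x') = x ^ n - x' ^ n := by
      apply two_step
      · simp [f0]
      · simp [f1]
      · intro n ih1 ih2
        have hc : ((f (n+2) : ℤ) : K) = σ * ((f (n+1) : ℤ) : K) - ((f n : ℤ) : K) := by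
          rw [frec, Int.cast_sub, Int.cast_mul]
        rw [hc, ← hsum]
        linear_combination (x + x') * ih2 - ih1 + (x ^ n - x' ^ n) * hxx'
    have hxne : x ≠ x' := by
      intro he
      have h2 : σ = 2 * x := by rw [← hsum, ← he]; ring
      have h4 : σ ^ 2 = 4 := by rw [h2]; linear_combination 4 * (he ▸ hxx' : x * x = 1)
      have : (σ - 2) * (σ + 2) = 0 := by linear_combination h4
      rcases mul_eq_zero.mp this with h | h
      · apply hs2; left
        apply hinj
        rw [map_intCast, map_ofNat]
        linear_combination h
      · apply hs2; right
        apply hinj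
        rw [map_intCast, map_neg, map_ofNat]
        linear_combination h
    have hfrob : x ^ p = x ∨ x ^ p = x' := by
      have hσp : σ ^ p = σ := by
        have : σ = algebraMap (ZMod p) K ((s : ℤ) : ZMod p) := by rw [map_intCast]
        rw [this, ← map_pow, ZMod.pow_card]
      have hy : (x ^ p) ^ 2 - σ * (x ^ p) + 1 = 0 := by
        have h1 := congrArg (frobenius K p) hx
        simp only [map_add, map_sub, map_mul, map_pow, map_one, map_zero, frobenius_def] at h1
        calc (x ^ p) ^ 2 - σ * (x ^ p) + 1 = (x ^ 2) ^ p - σ ^ p * x ^ p + 1 := by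
              rw [hσp, ← pow_mul, ← pow_mul, Nat.mul_comm 2 p]
          _ = 0 := by linear_combination h1
      have hfac : (x ^ p - x) * (x ^ p - x') = 0 := by
        linear_combination hy - x ^ p * hsum + hxx'
      rcases mul_eq_zero.mp hfac with h | h
      · exact Or.inl (sub_eq_zero.mp h)
      · exact Or.inr (sub_eq_zero.mp h)
    have hdvd_of_pow : ∀ h : ℕ, 0 < h → x ^ (2 * h) = 1 → (p : ℤ) ∣ f h := by
      intro h _ hpow
      have hxh : x' ^ h = x ^ h := by
        have e1 : x' ^ h * x ^ h = 1 := by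
          rw [← mul_pow, mul_comm x' x, hxx', one_pow]
        have e2 : x ^ h * x ^ h = 1 := by rw [← pow_add, ← two_mul, hpow]
        have hxh0 : x ^ h ≠ 0 := pow_ne_zero _ hx0
        exact mul_right_cancel₀ hxh0 (e1.trans e2.symm)
      have : ((f h : ℤ) : K) * (x - x') = 0 := by rw [hfx h, hxh]; ring
      have hzero : ((f h : ℤ) : K) = 0 := by
        rcases mul_eq_zero.mp this with h' | h'
        · exact h'
        · exact absurd (by linear_combination h' : x = x') hxne
      rw [← ZMod.intCast_zmod_eq_zero_iff_dvd]
      apply hinj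
      rw [map_intCast, map_zero]
      exact hzero
    rcases hfrob with hcase | hcase
    · -- x^(p-1) = 1
      refine ⟨(p - 1) / 2, by omega, by omega, ?_⟩
      apply hdvd_of_pow ((p - 1) / 2) (by omega)
      have h1 : x ^ (p - 1) = 1 := by
        have : x * x ^ (p - 1) = x * 1 := by
          rw [mul_one, ← pow_succ', show p - 1 + 1 = p by omega, hcase]
        exact mul_left_cancel₀ hx0 this
      rw [show 2 * ((p - 1) / 2) = p - 1 by omega, h1]
    · -- x^(p+1) = 1
      refine ⟨(p + 1) / 2, by omega, by omega, ?_⟩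
      apply hdvd_of_pow ((p + 1) / 2) (by omega)
      have h1 : x ^ (p + 1) = 1 := by
        rw [pow_succ, hcase, mul_comm, hxx']
      rw [show 2 * ((p + 1) / 2) = p + 1 by omega, h1]

lemma natCast_pow_dvd {q c : ℕ} {z : ℤ} : (q : ℤ) ^ c ∣ z ↔ q ^ c ∣ z.natAbs := by
  rw [← Int.natAbs_dvd_natAbs, Int.natAbs_pow, Int.natAbs_natCast]

lemma L2 {p : ℕ} (hp : p.Prime) (hodd : p ≠ 2) {m : ℕ} (hm : 0 < m) {j : ℕ} (hj : 1 ≤ j)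
    (h1 : (p : ℤ) ^ j ∣ f m) : (p : ℤ) ^ (j + 1) ∣ f (p * m) := by
  obtain ⟨M, rfl⟩ : ∃ M, m = M + 1 := ⟨m - 1, by omega⟩
  obtain ⟨J, rfl⟩ : ∃ J, j = J + 1 := ⟨j - 1, by omega⟩
  obtain ⟨X, Y, Z, hZ, hX, hY⟩ := key_identity s M p
  set F := f (M + 1)
  set u := f (M + 2)
  have hpF : (p : ℤ) ∣ F := dvd_trans (dvd_pow_self _ (by omega : J + 1 ≠ 0)) h1
  have hcu : IsCoprime (p : ℤ) u := cop_pu s hpF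
  have hch : p ∣ p.choose 2 :=
    Nat.Prime.dvd_choose_self hp (by norm_num) (by have := hp.two_le; omega)
  obtain ⟨w, hw⟩ : (p : ℤ) ∣ (p.choose 2 : ℤ) := Int.natCast_dvd_natCast.mpr hch
  obtain ⟨G, hG⟩ := h1
  have key : (p : ℤ) ^ (J + 2) ∣ f (p * (M + 1)) * u ^ 2 := by
    rw [hX, hw, hG]
    exact ⟨G * u ^ (p+1) - (p:ℤ)^(J+1) * (w * s * G^2 * u^p) + (p:ℤ)^(2*J+1) * (G^3 * X), by ring⟩
  exact ((hcu.pow : IsCoprime ((p:ℤ)^(J+2)) (u^2))).dvd_of_dvd_mul_right key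

lemma prime_pow_rank {p : ℕ} (hp : p.Prime) (hodd : p ≠ 2) {e : ℕ} (he : 1 ≤ e) :
    ∃ n : ℕ, 0 < n ∧ n ≤ p ^ e ∧ ((p ^ e : ℕ) : ℤ) ∣ f n := by
  obtain ⟨n₀, hn₀, hle, hdvd⟩ := small_rank s hp hodd
  have key : ∀ i : ℕ, (p : ℤ) ^ (1 + i) ∣ f (n₀ * p ^ i) := by
    intro i
    induction i with
    | zero => simpa using hdvd
    | succ i ih =>
      have hmpos : 0 < n₀ * p ^ i := Nat.mul_pos hn₀ (Nat.pow_pos hp.pos)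
      have := L2 s hp hodd hmpos (by omega : 1 ≤ 1 + i) ih
      have heq : p * (n₀ * p ^ i) = n₀ * p ^ (i + 1) := by ring
      rw [heq] at this
      exact this
  obtain ⟨E, rfl⟩ : ∃ E, e = E + 1 := ⟨e - 1, by omega⟩
  refine ⟨n₀ * p ^ E, Nat.mul_pos hn₀ (Nat.pow_pos hp.pos), ?_, ?_⟩
  · calc n₀ * p ^ E ≤ p * p ^ E := Nat.mul_le_mul_right _ hle
      _ = p ^ (E + 1) := (pow_succ' p E).symm
  · have := key E
    rw [show (1 + E) = E + 1 by omega] at this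
    convert this using 1
    push_cast
    ring

lemma per_prime (hs : 2 ≤ s) {q : ℕ} (hq : q.Prime) (hq2 : q ≠ 2) {r : ℕ} (hr : 0 < r)
    (hqfr : (q : ℤ) ∣ f r) {k : ℕ} (hk : 0 < k) :
    (f (r * k)).natAbs.factorization q = ((f r).natAbs * k).factorization q := by
  have hfr : (f r).natAbs ≠ 0 := by
    have := fpos s hs hr; omega
  have hfrk : (f (r * k)).natAbs ≠ 0 := by
    have := fpos s hs (Nat.mul_pos hr hk); omega
  set a := (f r).natAbs with ha
  set j := a.factorization q with hj
  have hj1 : 1 ≤ j := by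
    rw [hj]
    have : q ^ 1 ∣ a := by
      rw [← natCast_pow_dvd (q := q) (c := 1) (z := f r)] at *
      simpa using hqfr
    exact (hq.pow_dvd_iff_le_factorization hfr).mp this
  have hdj : (q : ℤ) ^ j ∣ f r := by
    rw [natCast_pow_dvd]
    exact (hq.pow_dvd_iff_le_factorization hfr).mpr (le_refl j)
  have hndj : ¬ (q : ℤ) ^ (j + 1) ∣ f r := by
    rw [natCast_pow_dvd]
    intro h
    have := (hq.pow_dvd_iff_le_factorization hfr).mp h
    omega
  set t := k.factorization q with ht
  set k' := k / q ^ t with hk'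
  have hsplit : q ^ t * k' = k := Nat.ordProj_mul_ordCompl_eq_self k q
  have hknd : ¬ q ∣ k' := Nat.not_dvd_ordCompl hq (by omega)
  have hEV := EV s hq hq2 hr hj1 hdj hndj t hknd
  rw [mul_assoc, hsplit] at hEV
  have hA : (f (r * k)).natAbs.factorization q = j + t := by
    have h1 : j + t ≤ (f (r * k)).natAbs.factorization q :=
      (hq.pow_dvd_iff_le_factorization hfrk).mp (natCast_pow_dvd.mp hEV.1)
    have h2 : ¬ (j + t + 1 ≤ (f (r * k)).natAbs.factorization q) := by
      intro h
      exact hEV.2 (natCast_pow_dvd.mpr ((hq.pow_dvd_iff_le_factorization hfrk).mpr h))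
    omega
  rw [hA, Nat.factorization_mul hfr (by omega : k ≠ 0)]
  simp [← hj, ← ht]

lemma dval_congr {d : ℕ} {A B : ℤ} (h : ∀ c : ℕ, ((d:ℤ)^c ∣ A ↔ (d:ℤ)^c ∣ B)) :
    dAdicVal d A = dAdicVal d B := by
  unfold dAdicVal
  congr 1
  ext c
  exact h c

lemma dval_eq_zero {d : ℕ} {A : ℤ} (h : ¬ (d:ℤ) ∣ A) : dAdicVal d A = 0 := by
  unfold dAdicVal
  have hset : {k : ℕ | (d:ℤ)^k ∣ A} = {0} := by
    ext c
    simp only [Set.mem_setOf_eq, Set.mem_singleton_iff]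
    constructor
    · intro hc
      by_contra h0
      exact h (dvd_trans (dvd_pow_self _ h0) hc)
    · rintro rfl; simp
  rw [hset, csSup_singleton]

end ACMS

/-- Valuation conjecture of ACMS for arbitrary odd d ≥ 3. -/
theorem valuation_conj (s : ℤ) (hs : 2 ≤ s) (d : ℕ) (hd : 3 ≤ d) (hodd : Odd d) :
    ∃ s' d' : ℕ, 0 < s' ∧ 0 < d' ∧ d' ≤ d ∧
      ∀ n : ℕ, 0 < n →
        (¬ d' ∣ n → dAdicVal d (genFib s (-1) n) = 0) ∧
        (d' ∣ n → dAdicVal d (genFib s (-1) n) = dAdicVal d ((s' * (n / d') : ℕ) : ℤ)) := by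
  classical
  haveI : NeZero d := ⟨by omega⟩
  have hd0 : d ≠ 0 := by omega
  obtain hex := ACMS.rank_exists s d
  set r := Nat.find hex with hrdef
  obtain ⟨hrpos, hrdvd⟩ := Nat.find_spec hex
  have hmin : ∀ m, 0 < m → m < r → ¬ (d:ℤ) ∣ genFib s (-1) m := fun m hm hlt hdvd =>
    Nat.find_min hex hlt ⟨hm, hdvd⟩
  have hchar := ACMS.rank_char s hrpos hrdvd hmin
  -- facts about primes of d
  have hq2 : ∀ q ∈ d.primeFactors, q ≠ 2 := by
    intro q hqm hq2eq
    subst hq2eq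
    have h2d : 2 ∣ d := Nat.dvd_of_mem_primeFactors hqm
    obtain ⟨c, hc⟩ := h2d
    obtain ⟨c', hc'⟩ := hodd
    omega
  -- bound r ≤ d
  have hfacEx : ∀ q ∈ d.primeFactors, ∃ n, 0 < n ∧ n ≤ q ^ d.factorization q ∧
      ((q ^ d.factorization q : ℕ) : ℤ) ∣ genFib s (-1) n := by
    intro q hqm
    have hq : q.Prime := Nat.prime_of_mem_primeFactors hqm
    have he : 1 ≤ d.factorization q :=
      (Nat.Prime.factorization_pos_of_dvd hq hd0 (Nat.dvd_of_mem_primeFactors hqm))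
    exact ACMS.prime_pow_rank s hq (hq2 q hqm) he
  choose! g hg1 hg2 hg3 using hfacEx
  set N := ∏ q ∈ d.primeFactors, g q with hN
  have hNpos : 0 < N := Finset.prod_pos hg1
  have hprod : ∏ q ∈ d.primeFactors, q ^ d.factorization q = d := by
    rw [← Nat.support_factorization]
    exact Nat.factorization_prod_pow_eq_self hd0
  have hNle : N ≤ d := by
    calc N ≤ ∏ q ∈ d.primeFactors, q ^ d.factorization q :=
          Finset.prod_le_prod' hg2
      _ = d := hprod
  have hfN0 : (genFib s (-1) N).natAbs ≠ 0 :=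
    Int.natAbs_ne_zero.mpr (ACMS.fpos s hs hNpos).ne'
  have hdvdN : (d : ℤ) ∣ genFib s (-1) N := by
    have hq : ∀ q ∈ d.primeFactors, q ^ d.factorization q ∣ (genFib s (-1) N).natAbs := by
      intro q hqm
      have h2 : genFib s (-1) (g q) ∣ genFib s (-1) N :=
        ACMS.fdvd s (Finset.dvd_prod_of_mem g hqm)
      have h3 : ((q ^ d.factorization q : ℕ) : ℤ) ∣ genFib s (-1) N :=
        dvd_trans (hg3 q hqm) h2
      rw [show ((q ^ d.factorization q : ℕ) : ℤ) = (q:ℤ) ^ d.factorization q by push_cast; ring,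
        ACMS.natCast_pow_dvd] at h3
      exact h3
    have hle : d.factorization ≤ (genFib s (-1) N).natAbs.factorization := by
      rw [Finsupp.le_iff]
      intro q hqm
      rw [Nat.support_factorization] at hqm
      exact ((Nat.prime_of_mem_primeFactors hqm).pow_dvd_iff_le_factorization hfN0).mp (hq q hqm)
    have := (Nat.factorization_le_iff_dvd hd0 hfN0).mp hle
    exact Int.dvd_natAbs.mp (Int.natCast_dvd_natCast.mpr this)
  have hrN : r ≤ N := Nat.find_min' hex ⟨hNpos, hdvdN⟩
  refine ⟨(genFib s (-1) r).natAbs, r, ?_, hrpos, le_trans hrN hNle, ?_⟩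
  · exact Int.natAbs_pos.mpr (ACMS.fpos s hs hrpos).ne'
  intro n hn
  constructor
  · intro hnd
    exact ACMS.dval_eq_zero (fun hdfn => hnd ((hchar n).mp hdfn))
  · intro hdn
    set k := n / r with hk
    have hnk : n = r * k := by
      rw [hk, Nat.mul_div_cancel' hdn]
    have hkpos : 0 < k := Nat.div_pos (Nat.le_of_dvd hn hdn) hrpos
    have hA0 : (genFib s (-1) n).natAbs ≠ 0 :=
      Int.natAbs_ne_zero.mpr (ACMS.fpos s hs hn).ne'
    have hr0 : (genFib s (-1) r).natAbs ≠ 0 :=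
      Int.natAbs_ne_zero.mpr (ACMS.fpos s hs hrpos).ne'
    have hB0 : (genFib s (-1) r).natAbs * k ≠ 0 := by positivity
    apply ACMS.dval_congr
    intro c
    have hcast : ((d:ℤ))^c ∣ (((genFib s (-1) r).natAbs * k : ℕ) : ℤ) ↔
        d^c ∣ (genFib s (-1) r).natAbs * k := by
      rw [ACMS.natCast_pow_dvd, Int.natAbs_natCast]
    rw [hcast, ACMS.natCast_pow_dvd]
    -- factorization criterion
    have key : ∀ q ∈ d.primeFactors,
        (genFib s (-1) n).natAbs.factorization q =
        ((genFib s (-1) r).natAbs * k).factorization q := by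
      intro q hqm
      have hq : q.Prime := Nat.prime_of_mem_primeFactors hqm
      have hqfr : (q : ℤ) ∣ genFib s (-1) r :=
        dvd_trans (Int.natCast_dvd_natCast.mpr (Nat.dvd_of_mem_primeFactors hqm)) hrdvd
      have := ACMS.per_prime s hs hq (hq2 q hqm) hrpos hqfr hkpos
      rw [← hnk] at this
      exact this
    have hdc0 : d ^ c ≠ 0 := pow_ne_zero _ hd0
    rw [← Nat.factorization_le_iff_dvd hdc0 hA0, ← Nat.factorization_le_iff_dvd hdc0 hB0]
    have hsupp : (d ^ c).factorization.support ⊆ d.primeFactors := by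
      rw [Nat.factorization_pow]
      refine subset_trans (Finsupp.support_smul) ?_
      rw [Nat.support_factorization]
    rw [Finsupp.le_iff' _ _ hsupp, Finsupp.le_iff' _ _ hsupp]
    exact forall_congr' fun q => forall_congr' fun hqm => by rw [key q hqm]
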